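/- Let q ≥ 3 be an integer and θ = 1 − 1/q. For every δ ∈ [0,θ], α_EP(δ) = min_{x ∈ [0,δ]} α_E(x)·(θ − δ)/(θ − x), where α_EP(δ) = 1 − H_q(θ − √(θ² − δθ)) for δ ∈ [0, (2q−3)/(q(q−1))] and α_EP(δ) = (θ − δ)(q−1)log_q(q−1)/(q−2) for δ ∈ [(2q−3)/(q(q−1)), θ], and α_E(x) = 1 − H_q(θ(1 − √(1 − x/θ))). -/

import Mathlib

open Filter Real Set

/-- The q-ary entropy function. -/
noncomputable def qEntropy (q : ℕ) (x : ℝ) : ℝ :=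
  x * Real.logb q (((q : ℝ) - 1) / x) + (1 - x) * Real.logb q (1 / (1 - x))

/-- The Elias bound `α_E` (with `θ = 1 - 1/q`). -/
noncomputable def alphaE (q : ℕ) (x : ℝ) : ℝ :=
  1 - qEntropy q ((1 - 1 / (q : ℝ)) * (1 - Real.sqrt (1 - x / (1 - 1 / (q : ℝ)))))

/-- The hybrid Elias-Plotkin bound `α_EP` (with `θ = 1 - 1/q`). -/
noncomputable def alphaEP (q : ℕ) (δ : ℝ) : ℝ :=
  if δ ≤ (2 * (q : ℝ) - 3) / ((q : ℝ) * ((q : ℝ) - 1)) then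
    1 - qEntropy q ((1 - 1 / (q : ℝ)) -
      Real.sqrt ((1 - 1 / (q : ℝ)) ^ 2 - δ * (1 - 1 / (q : ℝ))))
  else ((1 - 1 / (q : ℝ)) - δ) * (((q : ℝ) - 1) * Real.logb q ((q : ℝ) - 1) / ((q : ℝ) - 2))

noncomputable def hh (Q y : ℝ) : ℝ :=
  y * Real.log (Q - 1) + Real.negMulLog y + Real.negMulLog (1 - y)

noncomputable def hd (Q y : ℝ) : ℝ := Real.log (Q - 1) - Real.log y + Real.log (1 - y)

noncomputable def gg (Q y : ℝ) : ℝ :=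
  hd Q y * ((1 - 1/Q) - y) - 2 * (Real.log Q - hh Q y)

noncomputable def gd (Q y : ℝ) : ℝ :=
  (-1/y - 1/(1-y)) * ((1 - 1/Q) - y) + hd Q y

noncomputable def ps (Q y : ℝ) : ℝ := (Real.log Q - hh Q y) / ((1 - 1/Q) - y)^2

lemma hh_hasDeriv {Q y : ℝ} (h0 : 0 < y) (h1 : y < 1) :
    HasDerivAt (hh Q) (hd Q y) y := by
  have d1 : HasDerivAt (fun y : ℝ => y * Real.log (Q-1)) (Real.log (Q-1)) y := by
    simpa using (hasDerivAt_id y).mul_const (Real.log (Q-1))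
  have d2 : HasDerivAt Real.negMulLog (-Real.log y - 1) y :=
    Real.hasDerivAt_negMulLog h0.ne'
  have d3 : HasDerivAt (fun y : ℝ => Real.negMulLog (1 - y))
      ((-Real.log (1-y) - 1) * (-1)) y := by
    exact (Real.hasDerivAt_negMulLog (by linarith : (1:ℝ) - y ≠ 0)).comp y
      ((hasDerivAt_id' y).const_sub (1:ℝ))
  have := (d1.add d2).add d3
  refine this.congr_deriv ?_
  unfold hd; ring

lemma hd_hasDeriv {Q y : ℝ} (h0 : 0 < y) (h1 : y < 1) :
    HasDerivAt (hd Q) (-1/y - 1/(1-y)) y := by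
  have d2 : HasDerivAt Real.log (1/y) y := by
    simpa [one_div] using Real.hasDerivAt_log h0.ne'
  have d3 : HasDerivAt (fun y : ℝ => Real.log (1 - y)) ((1/(1-y)) * (-1)) y := by
    have : HasDerivAt Real.log (1/(1-y)) (1-y) := by
      simpa [one_div] using Real.hasDerivAt_log (by linarith : (1:ℝ) - y ≠ 0)
    exact this.comp y ((hasDerivAt_id' y).const_sub (1:ℝ))
  have := ((hasDerivAt_const y (Real.log (Q-1))).sub d2).add d3
  refine this.congr_deriv ?_
  ring

lemma gg_hasDeriv {Q y : ℝ} (h0 : 0 < y) (h1 : y < 1) :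
    HasDerivAt (gg Q) (gd Q y) y := by
  have dh := hh_hasDeriv (Q := Q) h0 h1
  have dhd := hd_hasDeriv (Q := Q) h0 h1
  have dlin : HasDerivAt (fun y : ℝ => (1 - 1/Q) - y) (-1) y := by
    exact (hasDerivAt_id' y).const_sub ((1:ℝ) - 1/Q)
  have d1 := dhd.mul dlin
  have d2 : HasDerivAt (fun y => 2 * (Real.log Q - hh Q y)) (2 * (0 - hd Q y)) y :=
    ((hasDerivAt_const y (Real.log Q)).sub dh).const_mul 2
  have := d1.sub d2
  refine this.congr_deriv ?_
  unfold gd; ring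

lemma gd_hasDeriv {Q y : ℝ} (h0 : 0 < y) (h1 : y < 1) :
    HasDerivAt (gd Q) ((1/y^2 - 1/(1-y)^2) * ((1 - 1/Q) - y)) y := by
  have dhd := hd_hasDeriv (Q := Q) h0 h1
  have dlin : HasDerivAt (fun y : ℝ => (1 - 1/Q) - y) (-1) y := by
    exact (hasDerivAt_id' y).const_sub ((1:ℝ) - 1/Q)
  have e1 : HasDerivAt (fun y : ℝ => -1/y) (1/y^2) y := by
    have := (hasDerivAt_inv h0.ne').neg
    simp only [neg_div, one_div]; exact this.congr_deriv (by ring)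
  have e2 : HasDerivAt (fun y : ℝ => 1/(1-y)) (1/(1-y)^2) y := by
    have hne : (1:ℝ) - y ≠ 0 := by linarith
    have base : HasDerivAt (fun z : ℝ => z⁻¹) (-((1-y)^2)⁻¹) (1-y) := hasDerivAt_inv hne
    have := base.comp y ((hasDerivAt_id' y).const_sub (1:ℝ))
    convert this using 1
    · rfl
    · rfl
    · funext z; simp [one_div]
    · field_simp
  have d2 : HasDerivAt (fun y : ℝ => -1/y - 1/(1-y)) (1/y^2 - 1/(1-y)^2) y := e1.sub e2
  have := (d2.mul dlin).add dhd
  refine this.congr_deriv ?_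
  ring

section Vals
variable {Q : ℝ} (hQ : 3 ≤ Q)

include hQ

lemma one_sub_inv : (1:ℝ) - 1/Q = (Q-1)/Q := by field_simp

lemma hh_t : hh Q (1/Q) = Real.log Q - (Q-2)/Q * Real.log (Q-1) := by
  have h0 : (0:ℝ) < Q := by linarith
  have h1 : (0:ℝ) < Q - 1 := by linarith
  have e1 : (1:ℝ) - 1/Q = (Q-1)/Q := by field_simp
  unfold hh
  rw [e1, Real.negMulLog, Real.negMulLog, Real.log_div h1.ne' h0.ne', one_div,
    Real.log_inv]
  field_simp
  ring

lemma hd_t : hd Q (1/Q) = 2 * Real.log (Q-1) := by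
  have h0 : (0:ℝ) < Q := by linarith
  have h1 : (0:ℝ) < Q - 1 := by linarith
  have e1 : (1:ℝ) - 1/Q = (Q-1)/Q := by field_simp
  unfold hd
  rw [e1, Real.log_div h1.ne' h0.ne', one_div, Real.log_inv]
  ring

lemma gg_t : gg Q (1/Q) = 0 := by
  unfold gg
  rw [hh_t hQ, hd_t hQ]
  field_simp
  ring

lemma hh_th : hh Q (1 - 1/Q) = Real.log Q := by
  have h0 : (0:ℝ) < Q := by linarith
  have h1 : (0:ℝ) < Q - 1 := by linarith
  have e1 : (1:ℝ) - 1/Q = (Q-1)/Q := by field_simp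
  have e2 : (1:ℝ) - (Q-1)/Q = 1/Q := by field_simp; ring
  unfold hh
  rw [e1, e2, Real.negMulLog, Real.negMulLog, Real.log_div h1.ne' h0.ne', one_div,
    Real.log_inv]
  field_simp
  ring

lemma gg_th : gg Q (1 - 1/Q) = 0 := by
  unfold gg
  rw [hh_th hQ]
  ring

lemma hd_th : hd Q (1 - 1/Q) = 0 := by
  have h0 : (0:ℝ) < Q := by linarith
  have h1 : (0:ℝ) < Q - 1 := by linarith
  have e1 : (1:ℝ) - 1/Q = (Q-1)/Q := by field_simp
  have e2 : (1:ℝ) - (Q-1)/Q = 1/Q := by field_simp; ring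
  unfold hd
  rw [e1, e2, Real.log_div h1.ne' h0.ne', one_div, Real.log_inv]
  ring

lemma gd_th : gd Q (1 - 1/Q) = 0 := by
  unfold gd
  rw [hd_th hQ]
  ring

end Vals

/-- `2 log u ≤ u - 1/u` for `u ≥ 1`. -/
lemma two_log_le (u : ℝ) (hu : 1 ≤ u) : 2 * Real.log u ≤ u - 1/u := by
  have hder : ∀ x : ℝ, 0 < x → HasDerivAt (fun u : ℝ => u - 1/u - 2 * Real.log u)
      ((1 - 1/x)^2) x := by
    intro x hx0
    have := ((hasDerivAt_id x).sub ((hasDerivAt_inv hx0.ne').const_mul 1)).sub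
      ((Real.hasDerivAt_log hx0.ne').const_mul 2)
    refine this.congr_deriv ?_
    field_simp
    ring
  have key : MonotoneOn (fun u : ℝ => u - 1/u - 2 * Real.log u) (Set.Ici 1) := by
    apply monotoneOn_of_deriv_nonneg (convex_Ici 1)
    · apply ContinuousOn.sub
      · apply ContinuousOn.sub continuousOn_id
        exact ContinuousOn.div continuousOn_const continuousOn_id
          (fun x hx => by simp at hx; positivity)
      · exact (continuousOn_const.mul (Real.continuousOn_log.mono
          (fun x hx => by simp at hx ⊢; positivity)))
    · intro x hx
      rw [interior_Ici] at hx
      simp only [Set.mem_Ioi] at hx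
      exact (hder x (by linarith)).differentiableAt.differentiableWithinAt
    · intro x hx
      rw [interior_Ici] at hx
      simp only [Set.mem_Ioi] at hx
      rw [(hder x (by linarith)).deriv]
      positivity
  have h1 := key (Set.self_mem_Ici) (by exact hu) hu
  simp only [Real.log_one] at h1
  linarith [h1]

lemma phi_nonneg {Q : ℝ} (hQ : 3 ≤ Q) :
    0 ≤ 2 * Real.log Q - 2 * Real.log 2 - (3/2 - 1/Q) * Real.log (Q-1) := by
  set phi : ℝ → ℝ := fun Q => 2 * Real.log Q - 2 * Real.log 2 - (3/2 - 1/Q) * Real.log (Q-1)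
    with hphi
  have hder : ∀ x : ℝ, 3 ≤ x → HasDerivAt phi
      (2/x - (1/x^2) * Real.log (x-1) - (3/2 - 1/x)/(x-1)) x := by
    intro x hx
    have hx0 : (0:ℝ) < x := by linarith
    have hx1 : (0:ℝ) < x - 1 := by linarith
    have d1 : HasDerivAt (fun x : ℝ => 2 * Real.log x) (2 * x⁻¹) x :=
      (Real.hasDerivAt_log hx0.ne').const_mul 2
    have d2 : HasDerivAt (fun x : ℝ => Real.log (x - 1)) ((x-1)⁻¹) x := by
      have := (Real.hasDerivAt_log hx1.ne').comp x
        ((hasDerivAt_id x).sub (hasDerivAt_const x 1))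
      exact this.congr_deriv (by simp)
    have d3 : HasDerivAt (fun x : ℝ => (3/2 - 1/x)) ((x^2)⁻¹) x := by
      have := (hasDerivAt_const x (3/2 : ℝ)).sub ((hasDerivAt_inv hx0.ne').const_mul 1)
      refine this.congr_deriv ?_
      ring
    have := (d1.sub (hasDerivAt_const x (2 * Real.log 2))).sub (d3.mul d2)
    refine this.congr_deriv ?_
    field_simp
    ring
  have key : MonotoneOn phi (Set.Ici 3) := by
    apply monotoneOn_of_deriv_nonneg (convex_Ici 3)
    · intro x hx
      exact (hder x hx).continuousAt.continuousWithinAt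
    · intro x hx
      rw [interior_Ici] at hx
      exact (hder x (le_of_lt hx)).differentiableAt.differentiableWithinAt
    · intro x hx
      rw [interior_Ici] at hx
      simp only [Set.mem_Ioi] at hx
      rw [(hder x (le_of_lt hx)).deriv]
      have hx0 : (0:ℝ) < x := by linarith
      have hx1 : (1:ℝ) ≤ x - 1 := by linarith
      have h2 := two_log_le (x-1) hx1
      -- 2 (x-1) log(x-1) ≤ (x-1)^2 - 1 = x^2 - 2x
      have h3 : 2 * (x-1) * Real.log (x-1) ≤ x^2 - 2*x := by
        have := mul_le_mul_of_nonneg_left h2 (by linarith : (0:ℝ) ≤ x - 1)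
        have e : (x-1) * ((x-1) - 1/(x-1)) = x^2 - 2*x := by
          field_simp
          ring
        nlinarith [this]
      have e : 2/x - (1/x^2) * Real.log (x-1) - (3/2 - 1/x)/(x-1)
          = (x^2 - 2*x - 2*(x-1)*Real.log (x-1)) / (2*x^2*(x-1)) := by
        field_simp
        ring
      rw [e]
      apply div_nonneg (by linarith) (by positivity)
  have h3 : 0 ≤ phi 3 := by
    have h19 : (19:ℝ) * Real.log 2 ≤ 12 * Real.log 3 := by
      have : Real.log (2^19) ≤ Real.log (3^12) := by
        apply Real.log_le_log (by positivity)
        norm_num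
      simpa [Real.log_pow] using this
    simp only [hphi]
    norm_num
    nlinarith [h19]
  have h4 : 0 ≤ phi Q := le_trans h3 (key (Set.self_mem_Ici) (Set.mem_Ici.2 hQ) hQ)
  simpa [hphi] using h4

lemma gg_half {Q : ℝ} (hQ : 3 ≤ Q) : gg Q (1/2) ≤ 0 := by
  have h1 : (0:ℝ) < Q - 1 := by linarith
  have e0 : (1:ℝ) - 1/2 = 1/2 := by norm_num
  have elog : Real.log (1/2 : ℝ) = -Real.log 2 := by
    rw [one_div, Real.log_inv]
  have key := phi_nonneg hQ
  unfold gg hd hh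
  rw [e0, elog, Real.negMulLog]
  rw [elog]
  nlinarith [key]

lemma deriv_gg_eq {Q : ℝ} {x : ℝ} (hx : x ∈ Set.Ioo (0:ℝ) 1) :
    deriv (gg Q) x = gd Q x := (gg_hasDeriv hx.1 hx.2).deriv

lemma deriv_gg_eventually {Q : ℝ} {x : ℝ} (hx : x ∈ Set.Ioo (0:ℝ) 1) :
    deriv (gg Q) =ᶠ[nhds x] gd Q :=
  Filter.eventually_of_mem (isOpen_Ioo.mem_nhds hx) (fun y hy => deriv_gg_eq hy)

lemma gg_convexOn {Q : ℝ} (hQ : 3 ≤ Q) :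
    ConvexOn ℝ (Set.Ioc (0:ℝ) (1/2)) (gg Q) := by
  have hsub : Set.Ioc (0:ℝ) (1/2) ⊆ Set.Ioo (0:ℝ) 1 := fun x hx =>
    ⟨hx.1, by have := hx.2; norm_num at this ⊢; linarith⟩
  have hint : interior (Set.Ioc (0:ℝ) (1/2)) = Set.Ioo (0:ℝ) (1/2) := interior_Ioc
  apply convexOn_of_deriv2_nonneg (convex_Ioc 0 (1/2))
  · intro x hx
    exact (gg_hasDeriv (hsub hx).1 (hsub hx).2).continuousAt.continuousWithinAt
  · rw [hint]
    intro x hx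
    have hx' := hsub (Set.Ioo_subset_Ioc_self hx)
    exact (gg_hasDeriv hx'.1 hx'.2).differentiableAt.differentiableWithinAt
  · rw [hint]
    intro x hx
    have hx' := hsub (Set.Ioo_subset_Ioc_self hx)
    have := (gd_hasDeriv (Q := Q) hx'.1 hx'.2).differentiableAt
    exact (this.congr_of_eventuallyEq (deriv_gg_eventually hx')).differentiableWithinAt
  · rw [hint]
    intro x hx
    have hx' := hsub (Set.Ioo_subset_Ioc_self hx)
    have hev := deriv_gg_eventually (Q := Q) hx'
    have : deriv (deriv (gg Q)) x = (1/x^2 - 1/(1-x)^2) * ((1 - 1/Q) - x) := by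
      rw [hev.deriv_eq]
      exact (gd_hasDeriv hx'.1 hx'.2).deriv
    have e2 : deriv^[2] (gg Q) x = deriv (deriv (gg Q)) x := by
      simp [Function.iterate_succ, Function.iterate_one]
    rw [e2, this]
    have hx0 : (0:ℝ) < x := hx'.1
    have hx1 : x < 1/2 := hx.2
    have hth : x < 1 - 1/Q := by
      have : 1/Q ≤ 1/3 := by
        apply div_le_div_of_nonneg_left <;> linarith
      linarith
    have h1 : (0:ℝ) < 1 - x := by linarith
    have hsq : 1/(1-x)^2 ≤ 1/x^2 := by
      apply div_le_div_of_nonneg_left (by norm_num) (by positivity)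
      nlinarith
    apply mul_nonneg (by linarith) (by linarith)

lemma tlt {Q : ℝ} (hQ : 3 ≤ Q) : 1/Q ≤ 1/3 :=
  div_le_div_of_nonneg_left (by norm_num) (by norm_num) hQ

lemma gg_nonneg {Q : ℝ} (hQ : 3 ≤ Q) {y : ℝ} (hy0 : 0 < y) (hyt : y ≤ 1/Q) :
    0 ≤ gg Q y := by
  have hQ0 : (0:ℝ) < Q := by linarith
  have ht0 : (0:ℝ) < 1/Q := by positivity
  have ht : 1/Q ≤ 1/3 := tlt hQ
  rcases eq_or_lt_of_le hyt with rfl | hyt'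
  · rw [gg_t hQ]
  have cv := gg_convexOn hQ
  set a := ((1:ℝ)/2 - 1/Q)/(1/2 - y) with ha
  set b := ((1:ℝ)/Q - y)/(1/2 - y) with hb
  have hy2 : y < 1/2 := by linarith
  have hden : (0:ℝ) < 1/2 - y := by linarith
  have ha0 : 0 < a := by
    apply div_pos (by linarith) hden
  have hb0 : 0 ≤ b := by
    apply div_nonneg (by linarith) (by linarith)
  have hab : a + b = 1 := by
    rw [ha, hb, ← add_div, div_eq_one_iff_eq hden.ne']
    ring
  have hcomb : a • y + b • (1/2 : ℝ) = 1/Q := by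
    rw [smul_eq_mul, smul_eq_mul, ha, hb, div_mul_eq_mul_div, div_mul_eq_mul_div,
      ← add_div, div_eq_iff hden.ne']
    ring
  have hmem1 : y ∈ Set.Ioc (0:ℝ) (1/2) := ⟨hy0, by linarith⟩
  have hmem2 : (1/2 : ℝ) ∈ Set.Ioc (0:ℝ) (1/2) := ⟨by norm_num, le_refl _⟩
  have := cv.2 hmem1 hmem2 (le_of_lt ha0) hb0 hab
  rw [hcomb, gg_t hQ] at this
  simp only [smul_eq_mul] at this
  have h2 := gg_half hQ
  nlinarith

lemma gg_nonpos {Q : ℝ} (hQ : 3 ≤ Q) {y : ℝ} (hyt : 1/Q ≤ y) (hyth : y ≤ 1 - 1/Q) :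
    gg Q y ≤ 0 := by
  have hQ0 : (0:ℝ) < Q := by linarith
  have ht0 : (0:ℝ) < 1/Q := by positivity
  have ht : 1/Q ≤ 1/3 := tlt hQ
  have hth : (2:ℝ)/3 ≤ 1 - 1/Q := by linarith
  rcases le_or_gt y (1/2) with hy2 | hy2
  · -- convex chord on [1/Q, 1/2]
    have cv := gg_convexOn hQ
    set a := ((1:ℝ)/2 - y)/(1/2 - 1/Q) with ha
    set b := (y - 1/Q)/(1/2 - 1/Q) with hb
    have hden : (0:ℝ) < 1/2 - 1/Q := by linarith
    have ha0 : 0 ≤ a := div_nonneg (by linarith) (by linarith)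
    have hb0 : 0 ≤ b := div_nonneg (by linarith) (by linarith)
    have hab : a + b = 1 := by
      rw [ha, hb, ← add_div, div_eq_one_iff_eq hden.ne']
      ring
    have hcomb : a • (1/Q : ℝ) + b • (1/2 : ℝ) = y := by
      rw [smul_eq_mul, smul_eq_mul, ha, hb, div_mul_eq_mul_div, div_mul_eq_mul_div,
        ← add_div, div_eq_iff hden.ne']
      ring
    have hmem1 : (1/Q : ℝ) ∈ Set.Ioc (0:ℝ) (1/2) := ⟨ht0, by linarith⟩
    have hmem2 : (1/2 : ℝ) ∈ Set.Ioc (0:ℝ) (1/2) := ⟨by norm_num, le_refl _⟩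
    have := cv.2 hmem1 hmem2 ha0 hb0 hab
    rw [hcomb, gg_t hQ] at this
    simp only [smul_eq_mul] at this
    have h2 := gg_half hQ
    nlinarith
  · -- monotone on [1/2, θ], gg θ = 0
    have hsub : Set.Icc (1/2 : ℝ) (1 - 1/Q) ⊆ Set.Ioo (0:ℝ) 1 := by
      intro x hx
      constructor
      · linarith [hx.1]
      · have := hx.2
        have : x ≤ 1 - 1/Q := this
        linarith
    -- gd is antitone on [1/2, θ] and gd θ = 0, so gd ≥ 0 there
    have hgd_nonneg : ∀ x ∈ Set.Icc (1/2 : ℝ) (1 - 1/Q), 0 ≤ gd Q x := by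
      have hanti : AntitoneOn (gd Q) (Set.Icc (1/2 : ℝ) (1 - 1/Q)) := by
        apply antitoneOn_of_deriv_nonpos (convex_Icc _ _)
        · intro x hx
          exact (gd_hasDeriv (hsub hx).1 (hsub hx).2).continuousAt.continuousWithinAt
        · rw [interior_Icc]
          intro x hx
          have hx' := hsub (Set.Ioo_subset_Icc_self hx)
          exact (gd_hasDeriv hx'.1 hx'.2).differentiableAt.differentiableWithinAt
        · rw [interior_Icc]
          intro x hx
          have hx' := hsub (Set.Ioo_subset_Icc_self hx)
          rw [(gd_hasDeriv hx'.1 hx'.2).deriv]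
          have h1 : (0:ℝ) < 1 - x := by linarith [hx'.2]
          have h2 : 1/x^2 ≤ 1/(1-x)^2 := by
            apply div_le_div_of_nonneg_left (by norm_num) (by positivity)
            nlinarith [hx.1, hx.2]
          have h3 : (0:ℝ) ≤ (1 - 1/Q) - x := by linarith [hx.2]
          apply mul_nonpos_of_nonpos_of_nonneg (by linarith) h3
      intro x hx
      have := hanti hx (Set.right_mem_Icc.2 (by linarith)) hx.2
      rw [gd_th hQ] at this
      exact this
    have hmono : MonotoneOn (gg Q) (Set.Icc (1/2 : ℝ) (1 - 1/Q)) := by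
      apply monotoneOn_of_deriv_nonneg (convex_Icc _ _)
      · intro x hx
        exact (gg_hasDeriv (hsub hx).1 (hsub hx).2).continuousAt.continuousWithinAt
      · rw [interior_Icc]
        intro x hx
        have hx' := hsub (Set.Ioo_subset_Icc_self hx)
        exact (gg_hasDeriv hx'.1 hx'.2).differentiableAt.differentiableWithinAt
      · rw [interior_Icc]
        intro x hx
        have hx' := hsub (Set.Ioo_subset_Icc_self hx)
        rw [deriv_gg_eq hx']
        exact hgd_nonneg x (Set.Ioo_subset_Icc_self hx)
    have := hmono (Set.mem_Icc.2 ⟨le_of_lt hy2, hyth⟩)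
      (Set.right_mem_Icc.2 (by linarith)) hyth
    rw [gg_th hQ] at this
    exact this

lemma hh_continuous (Q : ℝ) : Continuous (hh Q) := by
  unfold hh
  exact ((continuous_id.mul continuous_const).add Real.continuous_negMulLog).add
    (Real.continuous_negMulLog.comp (continuous_const.sub continuous_id))

lemma ps_hasDeriv {Q y : ℝ} (h0 : 0 < y) (h1 : y < 1) (hth : y ≠ 1 - 1/Q) :
    HasDerivAt (ps Q) (-(gg Q y)/((1 - 1/Q) - y)^3) y := by
  have hden : (1 - 1/Q) - y ≠ 0 := fun h => hth (by linarith [sub_eq_zero.1 h])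
  have dN : HasDerivAt (fun y => Real.log Q - hh Q y) (-(hd Q y)) y := by
    exact (hh_hasDeriv h0 h1).const_sub (Real.log Q)
  have dlin : HasDerivAt (fun y : ℝ => (1 - 1/Q) - y) (-1) y := by
    exact (hasDerivAt_id' y).const_sub ((1:ℝ) - 1/Q)
  have dden : HasDerivAt (fun y : ℝ => ((1 - 1/Q) - y)^2)
      (2 * ((1 - 1/Q) - y)^1 * (-1)) y := by
    exact (dlin.pow 2).congr_deriv (by norm_num)
  have := dN.div dden (pow_ne_zero 2 hden)
  refine this.congr_deriv ?_
  unfold gg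
  field_simp
  ring

lemma ps_contOn {Q : ℝ} (hQ : 3 ≤ Q) {s : Set ℝ} (hs : ∀ y ∈ s, y ≠ 1 - 1/Q) :
    ContinuousOn (ps Q) s := by
  unfold ps
  apply ContinuousOn.div
  · exact (continuous_const.sub (hh_continuous Q)).continuousOn
  · exact (continuous_const.sub continuous_id).pow 2 |>.continuousOn
  · intro y hy
    exact pow_ne_zero 2 (fun h => hs y hy (by linarith [sub_eq_zero.1 h]))

lemma ps_anti {Q : ℝ} (hQ : 3 ≤ Q) : AntitoneOn (ps Q) (Set.Icc 0 (1/Q)) := by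
  have hQ0 : (0:ℝ) < Q := by linarith
  have ht : 1/Q ≤ 1/3 := tlt hQ
  have ht0 : (0:ℝ) < 1/Q := by positivity
  have hth23 : (2:ℝ)/3 ≤ 1 - 1/Q := by linarith
  apply antitoneOn_of_deriv_nonpos (convex_Icc _ _)
  · apply ps_contOn hQ
    intro y hy
    have := hy.2
    intro h; rw [h] at this; linarith
  · rw [interior_Icc]
    intro x hx
    exact (ps_hasDeriv hx.1 (by linarith [hx.2]) (by intro h; linarith [hx.2,
      h ▸ hx.2])).differentiableAt.differentiableWithinAt
  · rw [interior_Icc]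
    intro x hx
    have hxth : x < 1 - 1/Q := by linarith [hx.2]
    rw [(ps_hasDeriv hx.1 (by linarith) hxth.ne).deriv]
    have h1 : 0 ≤ gg Q x := gg_nonneg hQ hx.1 (le_of_lt hx.2)
    have h0 : (0:ℝ) < (1 - 1/Q) - x := by linarith
    have h2 : (0:ℝ) < ((1 - 1/Q) - x)^3 := by positivity
    apply div_nonpos_of_nonpos_of_nonneg (by linarith) (le_of_lt h2)

lemma ps_mono {Q : ℝ} (hQ : 3 ≤ Q) {c : ℝ} (hc2 : c < 1 - 1/Q) :
    MonotoneOn (ps Q) (Set.Icc (1/Q) c) := by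
  have hQ0 : (0:ℝ) < Q := by linarith
  have ht0 : (0:ℝ) < 1/Q := by positivity
  apply monotoneOn_of_deriv_nonneg (convex_Icc _ _)
  · apply ps_contOn hQ
    intro y hy
    have := hy.2
    intro h; rw [h] at this; linarith
  · rw [interior_Icc]
    intro x hx
    have hx1 : x < 1 - 1/Q := lt_trans hx.2 hc2
    exact (ps_hasDeriv (lt_trans ht0 hx.1) (by linarith)
      hx1.ne).differentiableAt.differentiableWithinAt
  · rw [interior_Icc]
    intro x hx
    have hx1 : x < 1 - 1/Q := lt_trans hx.2 hc2
    rw [(ps_hasDeriv (lt_trans ht0 hx.1) (by linarith) hx1.ne).deriv]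
    have h1 : gg Q x ≤ 0 := gg_nonpos hQ (le_of_lt hx.1) (le_of_lt hx1)
    have h0 : (0:ℝ) < (1 - 1/Q) - x := by linarith
    have h2 : (0:ℝ) < ((1 - 1/Q) - x)^3 := by positivity
    apply div_nonneg (by linarith) (le_of_lt h2)

lemma qEntropy_eq' (q : ℕ) (hq : 3 ≤ q) {z : ℝ} (h0 : 0 ≤ z) (h1 : z < 1) :
    qEntropy q z = hh (q:ℝ) z / Real.log q := by
  have hQ : (3:ℝ) ≤ (q:ℝ) := by exact_mod_cast hq
  have hQ1 : (0:ℝ) < (q:ℝ) - 1 := by linarith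
  have hlq : Real.log q ≠ 0 := by
    apply ne_of_gt; apply Real.log_pos; linarith
  rcases eq_or_lt_of_le h0 with rfl | h0'
  · unfold qEntropy hh
    simp [Real.negMulLog]
  · have h1z : (0:ℝ) < 1 - z := by linarith
    unfold qEntropy hh
    rw [Real.logb, Real.logb, Real.log_div hQ1.ne' h0'.ne', one_div, Real.log_inv,
      Real.negMulLog, Real.negMulLog]
    field_simp
    ring

lemma one_sub_qEntropy (q : ℕ) (hq : 3 ≤ q) {z : ℝ} (h0 : 0 ≤ z) (h1 : z < 1) :
    1 - qEntropy q z = (Real.log q - hh (q:ℝ) z) / Real.log q := by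
  have hQ : (3:ℝ) ≤ (q:ℝ) := by exact_mod_cast hq
  have hlq : Real.log q ≠ 0 := by
    apply ne_of_gt; apply Real.log_pos; linarith
  rw [qEntropy_eq' q hq h0 h1]
  field_simp

lemma arg_eq (q : ℕ) (hq : 3 ≤ q) {x : ℝ} (hx0 : 0 ≤ x) (hxθ : x ≤ 1 - 1/(q:ℝ)) :
    (1 - 1/(q:ℝ)) * (1 - Real.sqrt (1 - x / (1 - 1/(q:ℝ)))) =
    (1 - 1/(q:ℝ)) - Real.sqrt ((1 - 1/(q:ℝ)) * ((1 - 1/(q:ℝ)) - x)) := by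
  have hQ : (3:ℝ) ≤ (q:ℝ) := by exact_mod_cast hq
  have hQ0 : (0:ℝ) < (q:ℝ) := by linarith
  have ht3 : 1/(q:ℝ) ≤ 1/3 := tlt hQ
  have hθ0 : (0:ℝ) < 1 - 1/(q:ℝ) := by linarith
  set θ := 1 - 1/(q:ℝ) with hθ
  have e1 : θ * (θ - x) = θ^2 * (1 - x/θ) := by
    field_simp
  rw [e1, Real.sqrt_mul (sq_nonneg θ), Real.sqrt_sq (le_of_lt hθ0)]
  ring

lemma value_eq (q : ℕ) (hq : 3 ≤ q) (δ : ℝ) {x : ℝ} (hx0 : 0 ≤ x)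
    (hxθ : x < 1 - 1/(q:ℝ)) :
    alphaE q x * ((1 - 1/(q:ℝ)) - δ) / ((1 - 1/(q:ℝ)) - x)
      = (((1 - 1/(q:ℝ)) - δ) * (1 - 1/(q:ℝ)) / Real.log q) *
        ps (q:ℝ) ((1 - 1/(q:ℝ)) - Real.sqrt ((1 - 1/(q:ℝ)) * ((1 - 1/(q:ℝ)) - x))) := by
  have hQ : (3:ℝ) ≤ (q:ℝ) := by exact_mod_cast hq
  have hQ0 : (0:ℝ) < (q:ℝ) := by linarith
  have ht3 : 1/(q:ℝ) ≤ 1/3 := tlt hQ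
  have hθ0 : (0:ℝ) < 1 - 1/(q:ℝ) := by linarith
  have hL : 0 < Real.log q := Real.log_pos (by linarith)
  set θ := 1 - 1/(q:ℝ) with hθ
  have hθ1 : θ < 1 := by
    rw [hθ]; have : (0:ℝ) < 1/(q:ℝ) := by positivity
    linarith
  set s := Real.sqrt (θ * (θ - x)) with hs
  have hprod : 0 < θ * (θ - x) := mul_pos hθ0 (by linarith)
  have hs0 : 0 < s := Real.sqrt_pos.2 hprod
  have hs2 : s^2 = θ * (θ - x) := Real.sq_sqrt (le_of_lt hprod)
  have hsθ : s ≤ θ := by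
    rw [hs]
    apply Real.sqrt_le_iff.2 ⟨le_of_lt hθ0, by nlinarith⟩
  have hy0 : 0 ≤ θ - s := by linarith
  have hy1 : θ - s < 1 := by linarith
  have hxeq : θ - x = s^2 / θ := by
    rw [hs2]; field_simp
  have hal : alphaE q x = (Real.log q - hh (q:ℝ) (θ - s)) / Real.log q := by
    rw [alphaE, arg_eq q hq hx0 (le_of_lt hxθ)]
    exact one_sub_qEntropy q hq hy0 hy1
  rw [hal]
  unfold ps
  have e2 : θ - (θ - s) = s := by ring
  rw [e2]
  rw [hxeq]
  field_simp

lemma ps_at_t {Q : ℝ} (hQ : 3 ≤ Q) : ps Q (1/Q) = Q * Real.log (Q-1) / (Q-2) := by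
  have hQ0 : (0:ℝ) < Q := by linarith
  have hQ2 : (0:ℝ) < Q - 2 := by linarith
  unfold ps
  rw [hh_t hQ]
  have e1 : 1 - 1/Q - 1/Q = (Q-2)/Q := by field_simp; ring
  rw [e1]
  have e2 : Real.log Q - (Real.log Q - (Q-2)/Q * Real.log (Q-1))
      = (Q-2)/Q * Real.log (Q-1) := by ring
  rw [e2]
  rw [div_eq_div_iff (by positivity) hQ2.ne']
  field_simp

lemma aux_scalar {L T D N : ℝ} (hL : L ≠ 0) (hT : T ≠ 0) (hD : D ≠ 0) :
    D * T / L * (N / (T * D)) = N / L := by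
  field_simp

set_option maxHeartbeats 1000000 in
/-- `α_EP(δ)` is the minimum of `α_E(x)(θ-δ)/(θ-x)` over `x ∈ [0,δ]`. -/
theorem stmt16 (q : ℕ) (hq : 3 ≤ q) (δ : ℝ)
    (hδ : δ ∈ Set.Icc (0 : ℝ) (1 - 1 / (q : ℝ))) :
    IsLeast
      ((fun x => alphaE q x * ((1 - 1 / (q : ℝ)) - δ) / ((1 - 1 / (q : ℝ)) - x)) ''
        Set.Icc (0 : ℝ) δ)
      (alphaEP q δ) := by
  have hQ : (3:ℝ) ≤ (q:ℝ) := by exact_mod_cast hq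
  have hQ0 : (0:ℝ) < (q:ℝ) := by linarith
  have hQ1 : (0:ℝ) < (q:ℝ) - 1 := by linarith
  have hQ2 : (0:ℝ) < (q:ℝ) - 2 := by linarith
  have ht3 : 1/(q:ℝ) ≤ 1/3 := tlt hQ
  have ht0 : (0:ℝ) < 1/(q:ℝ) := by positivity
  have hθ0 : (0:ℝ) < 1 - 1/(q:ℝ) := by linarith
  have hθ1 : 1 - 1/(q:ℝ) < 1 := by linarith
  have hL : 0 < Real.log q := Real.log_pos (by linarith)
  have hδ0 : 0 ≤ δ := hδ.1
  -- the Plotkin threshold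
  have hinv : (1/(q:ℝ)) * (q:ℝ) = 1 := by field_simp
  have hdsθ : (2 * (q:ℝ) - 3) / ((q:ℝ) * ((q:ℝ) - 1)) < 1 - 1/(q:ℝ) := by
    rw [div_lt_iff₀ (by positivity)]
    nlinarith [hinv, sq_nonneg ((q:ℝ) - 2)]
  have hds0 : 0 ≤ (2 * (q:ℝ) - 3) / ((q:ℝ) * ((q:ℝ) - 1)) :=
    div_nonneg (by linarith) (by positivity)
  rcases eq_or_lt_of_le hδ.2 with hEq | hδθ
  · -- δ = θ : everything is 0
    have hEP : alphaEP q δ = 0 := by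
      rw [alphaEP, if_neg (by rw [hEq]; exact not_le.2 hdsθ), hEq]
      ring
    constructor
    · refine ⟨0, ⟨le_refl 0, hδ0⟩, ?_⟩
      rw [hEP, hEq]
      simp
    · rintro v ⟨x, hx, rfl⟩
      rw [hEP, hEq]
      simp
  · -- δ < θ
    set b := (1 - 1/(q:ℝ)) - Real.sqrt ((1 - 1/(q:ℝ)) * ((1 - 1/(q:ℝ)) - δ)) with hb
    have hprod : 0 < (1 - 1/(q:ℝ)) * ((1 - 1/(q:ℝ)) - δ) := mul_pos hθ0 (by linarith)
    have hsb2 : (Real.sqrt ((1 - 1/(q:ℝ)) * ((1 - 1/(q:ℝ)) - δ)))^2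
        = (1 - 1/(q:ℝ)) * ((1 - 1/(q:ℝ)) - δ) := Real.sq_sqrt (le_of_lt hprod)
    have hbθ : b < 1 - 1/(q:ℝ) := by
      rw [hb]
      have := Real.sqrt_pos.2 hprod
      linarith
    have hb0 : 0 ≤ b := by
      rw [hb, sub_nonneg]
      apply Real.sqrt_le_iff.2 ⟨le_of_lt hθ0, by nlinarith⟩
    -- b ≤ 1/q iff δ ≤ δ*
    have hbiff : b ≤ 1/(q:ℝ) ↔ δ ≤ (2 * (q:ℝ) - 3) / ((q:ℝ) * ((q:ℝ) - 1)) := by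
      rw [hb, sub_le_iff_le_add]
      rw [show (1:ℝ)/(q:ℝ) + Real.sqrt ((1 - 1/(q:ℝ)) * ((1 - 1/(q:ℝ)) - δ))
        = Real.sqrt ((1 - 1/(q:ℝ)) * ((1 - 1/(q:ℝ)) - δ)) + 1/(q:ℝ) from by ring]
      rw [← sub_le_iff_le_add, Real.le_sqrt (by linarith) (le_of_lt hprod)]
      have equ : (q:ℝ) * (1 - 1/(q:ℝ) - 1/(q:ℝ)) = (q:ℝ) - 2 := by
        field_simp
        ring
      have equ2 : (q:ℝ) * (1 - 1/(q:ℝ)) = (q:ℝ) - 1 := by field_simp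
      constructor
      · intro h
        rw [le_div_iff₀ (by positivity)]
        have key : ((q:ℝ)-2)^2 ≤ ((q:ℝ)-1)*((q:ℝ)-1-δ*(q:ℝ)) := by
          calc ((q:ℝ)-2)^2 = (q:ℝ)^2 * ((1 - 1/(q:ℝ) - 1/(q:ℝ))^2) := by rw [← equ]; ring
          _ ≤ (q:ℝ)^2 * ((1 - 1/(q:ℝ)) * (1 - 1/(q:ℝ) - δ)) :=
            mul_le_mul_of_nonneg_left h (by positivity)
          _ = ((q:ℝ)*(1 - 1/(q:ℝ))) * ((q:ℝ)*(1 - 1/(q:ℝ))) - δ*(q:ℝ)*((q:ℝ)*(1 - 1/(q:ℝ))) := by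
            ring
          _ = ((q:ℝ)-1)*((q:ℝ)-1-δ*(q:ℝ)) := by rw [equ2]; ring
        nlinarith [key]
      · intro h
        rw [le_div_iff₀ (by positivity)] at h
        have key : ((q:ℝ)-2)^2 ≤ ((q:ℝ)-1)*((q:ℝ)-1-δ*(q:ℝ)) := by nlinarith [h]
        have h3 : ((q:ℝ))^2 * ((1 - 1/(q:ℝ) - 1/(q:ℝ))^2)
            ≤ ((q:ℝ))^2 * ((1 - 1/(q:ℝ)) * (1 - 1/(q:ℝ) - δ)) := by
          calc ((q:ℝ))^2 * ((1 - 1/(q:ℝ) - 1/(q:ℝ))^2) = ((q:ℝ)-2)^2 := by rw [← equ]; ring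
          _ ≤ ((q:ℝ)-1)*((q:ℝ)-1-δ*(q:ℝ)) := key
          _ = ((q:ℝ)*(1 - 1/(q:ℝ))) * ((q:ℝ)*(1 - 1/(q:ℝ))) - δ*(q:ℝ)*((q:ℝ)*(1 - 1/(q:ℝ))) := by
            rw [equ2]; ring
          _ = ((q:ℝ))^2 * ((1 - 1/(q:ℝ)) * (1 - 1/(q:ℝ) - δ)) := by ring
        exact le_of_mul_le_mul_left h3 (by positivity)
    -- the y map and its range
    have hymem : ∀ x, 0 ≤ x → x ≤ δ →
        0 ≤ (1 - 1/(q:ℝ)) - Real.sqrt ((1 - 1/(q:ℝ)) * ((1 - 1/(q:ℝ)) - x)) ∧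
        (1 - 1/(q:ℝ)) - Real.sqrt ((1 - 1/(q:ℝ)) * ((1 - 1/(q:ℝ)) - x)) ≤ b := by
      intro x hx0 hxδ
      constructor
      · rw [sub_nonneg]
        apply Real.sqrt_le_iff.2 ⟨le_of_lt hθ0, ?_⟩
        calc (1 - 1/(q:ℝ)) * ((1 - 1/(q:ℝ)) - x) ≤ (1 - 1/(q:ℝ)) * (1 - 1/(q:ℝ)) :=
              mul_le_mul_of_nonneg_left (by linarith) (le_of_lt hθ0)
          _ = (1 - 1/(q:ℝ))^2 := (sq _).symm
      · rw [hb]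
        have : Real.sqrt ((1 - 1/(q:ℝ)) * ((1 - 1/(q:ℝ)) - δ))
            ≤ Real.sqrt ((1 - 1/(q:ℝ)) * ((1 - 1/(q:ℝ)) - x)) :=
          Real.sqrt_le_sqrt (mul_le_mul_of_nonneg_left (by linarith) (le_of_lt hθ0))
        linarith
    set C := (((1 - 1/(q:ℝ)) - δ) * (1 - 1/(q:ℝ)) / Real.log q) with hC
    have hC0 : 0 < C := by
      rw [hC]
      apply div_pos (mul_pos (by linarith) hθ0) hL
    by_cases hc : δ ≤ (2 * (q:ℝ) - 3) / ((q:ℝ) * ((q:ℝ) - 1))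
    · -- Elias regime : minimizer at x = δ, b ≤ 1/q
      have hbt : b ≤ 1/(q:ℝ) := hbiff.2 hc
      have hδne : (1 - 1/(q:ℝ)) - δ ≠ 0 := by linarith
      have hEP : alphaEP q δ = C * ps (q:ℝ) b := by
        rw [alphaEP, if_pos hc]
        have e1 : (1 - 1/(q:ℝ))^2 - δ * (1 - 1/(q:ℝ))
            = (1 - 1/(q:ℝ)) * ((1 - 1/(q:ℝ)) - δ) := by ring
        rw [e1, ← hb]
        rw [one_sub_qEntropy q hq hb0 (lt_trans hbθ hθ1)]
        rw [hC]
        unfold ps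
        have e2 : (1 - 1/(q:ℝ)) - b = Real.sqrt ((1 - 1/(q:ℝ)) * ((1 - 1/(q:ℝ)) - δ)) := by
          rw [hb]; ring
        rw [e2, hsb2]
        exact (aux_scalar hL.ne' hθ0.ne' hδne).symm
      constructor
      · refine ⟨δ, ⟨hδ0, le_refl δ⟩, ?_⟩
        show alphaE q δ * ((1 - 1/(q:ℝ)) - δ) / ((1 - 1/(q:ℝ)) - δ) = alphaEP q δ
        rw [value_eq q hq δ hδ0 hδθ, ← hb, ← hC, hEP]
      · rintro v ⟨x, hx, rfl⟩
        show alphaEP q δ ≤ alphaE q x * ((1 - 1/(q:ℝ)) - δ) / ((1 - 1/(q:ℝ)) - x)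
        rw [value_eq q hq δ hx.1 (by linarith [hx.2]), ← hC, hEP]
        apply mul_le_mul_of_nonneg_left _ (le_of_lt hC0)
        have hy := hymem x hx.1 hx.2
        exact ps_anti hQ ⟨hy.1, le_trans hy.2 hbt⟩ ⟨hb0, hbt⟩ hy.2
    · -- Plotkin regime : minimizer at x = δ*
      have hbt : 1/(q:ℝ) < b := not_le.1 (fun h => hc (hbiff.1 h))
      set ds := (2 * (q:ℝ) - 3) / ((q:ℝ) * ((q:ℝ) - 1)) with hds
      have hdsδ : ds ≤ δ := le_of_lt (not_le.1 hc)
      -- y(δ*) = 1/q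
      have hyds : (1 - 1/(q:ℝ)) - Real.sqrt ((1 - 1/(q:ℝ)) * ((1 - 1/(q:ℝ)) - ds))
          = 1/(q:ℝ) := by
        have e1 : (1 - 1/(q:ℝ)) * ((1 - 1/(q:ℝ)) - ds) = (((q:ℝ)-2)/(q:ℝ))^2 := by
          rw [hds]
          field_simp
          ring
        rw [e1, Real.sqrt_sq (by positivity)]
        field_simp
        ring
      have hEP : alphaEP q δ = C * ps (q:ℝ) (1/(q:ℝ)) := by
        rw [alphaEP, if_neg hc, ps_at_t hQ, hC, Real.logb]
        field_simp
      constructor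
      · refine ⟨ds, ⟨hds0, hdsδ⟩, ?_⟩
        show alphaE q ds * ((1 - 1/(q:ℝ)) - δ) / ((1 - 1/(q:ℝ)) - ds) = alphaEP q δ
        rw [value_eq q hq δ hds0 (lt_of_le_of_lt hdsδ hδθ), hyds, ← hC, hEP]
      · rintro v ⟨x, hx, rfl⟩
        show alphaEP q δ ≤ alphaE q x * ((1 - 1/(q:ℝ)) - δ) / ((1 - 1/(q:ℝ)) - x)
        rw [value_eq q hq δ hx.1 (by linarith [hx.2]), ← hC, hEP]
        apply mul_le_mul_of_nonneg_left _ (le_of_lt hC0)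
        have hy := hymem x hx.1 hx.2
        rcases le_or_gt ((1 - 1/(q:ℝ)) - Real.sqrt ((1 - 1/(q:ℝ)) * ((1 - 1/(q:ℝ)) - x)))
          (1/(q:ℝ)) with h | h
        · exact ps_anti hQ ⟨hy.1, h⟩ ⟨le_of_lt ht0, le_refl _⟩ h
        · exact ps_mono hQ hbθ ⟨le_refl _, le_of_lt hbt⟩ ⟨le_of_lt h, hy.2⟩ (le_of_lt h)
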